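/- Proposition 1 (Pruning is Worse under Noise), asymptotic directional form: suppose gᵗ = 0 (θ is a critical point of the clean loss), and let v ∈ E be a direction with ⟨gⁿ, v⟩ ≥ 0 and Bⁿ(v, v) − Bᵗ(v, v) > 0. Then there exists ε > 0 such that for every s with 0 < s < ε, the loss gap strictly increases after the pruning perturbation s·v: Δℒ(θ) < Δℒ(θ + s·v). -/

import Mathlib

open Asymptotics Filter

/-- Proposition 1 (Pruning is Worse under Noise), asymptotic directional form:
suppose `gᵗ = 0`, and let `v` be a direction with `⟨gⁿ, v⟩ ≥ 0` and
`Bⁿ(v, v) − Bᵗ(v, v) > 0`. Then there exists `ε > 0` such that for every `s` with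
`0 < s < ε`, the loss gap strictly increases after the pruning perturbation `s • v`. -/
theorem pruning_worse_under_noise_asymptotic
    (D : ℕ) (θ v gt gn : EuclideanSpace ℝ (Fin D))
    (Lt Ln : EuclideanSpace ℝ (Fin D) → ℝ)
    (Bt Bn : EuclideanSpace ℝ (Fin D) →L[ℝ] EuclideanSpace ℝ (Fin D) →L[ℝ] ℝ)
    (hBt_symm : ∀ x y, Bt x y = Bt y x)
    (hBn_symm : ∀ x y, Bn x y = Bn y x)
    (hLt : (fun h : EuclideanSpace ℝ (Fin D) =>
        Lt (θ + h) - Lt θ - (inner ℝ gt h : ℝ) - (1 / 2) * Bt h h)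
      =o[nhds 0] fun h => ‖h‖ ^ 2)
    (hLn : (fun h : EuclideanSpace ℝ (Fin D) =>
        Ln (θ + h) - Ln θ - (inner ℝ gn h : ℝ) - (1 / 2) * Bn h h)
      =o[nhds 0] fun h => ‖h‖ ^ 2)
    (hgt : gt = 0)
    (hgn : (0 : ℝ) ≤ inner ℝ gn v)
    (hB : 0 < Bn v v - Bt v v) :
    ∃ ε > (0 : ℝ), ∀ s : ℝ, 0 < s → s < ε →
      Ln θ - Lt θ < Ln (θ + s • v) - Lt (θ + s • v) := by
  subst hgt
  have hv : v ≠ 0 := by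
    rintro rfl; simp at hB
  have hvpos : (0:ℝ) < ‖v‖ := norm_pos_iff.mpr hv
  have hv2 : (0:ℝ) < ‖v‖ ^ 2 := pow_pos hvpos 2
  -- the combined remainder
  have hg : (fun h : EuclideanSpace ℝ (Fin D) =>
      (Ln (θ + h) - Lt (θ + h)) - (Ln θ - Lt θ) - (inner ℝ gn h : ℝ)
        - (1 / 2) * (Bn h h - Bt h h)) =o[nhds 0] fun h => ‖h‖ ^ 2 := by
    have := hLn.sub hLt
    apply this.congr' _ (by rfl)
    filter_upwards with h
    simp [inner_zero_left]
    ring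
  set c : ℝ := (Bn v v - Bt v v) / 4 with hc
  have hcpos : 0 < c := by rw [hc]; linarith
  have hb := hg.def (div_pos hcpos hv2)
  rw [Metric.eventually_nhds_iff] at hb
  obtain ⟨δ, hδ, hbd⟩ := hb
  refine ⟨δ / ‖v‖, div_pos hδ hvpos, fun s hs hsδ => ?_⟩
  have hnorm : ‖s • v‖ = s * ‖v‖ := by
    rw [norm_smul, Real.norm_eq_abs, abs_of_pos hs]
  have hmem : dist (s • v) 0 < δ := by
    rw [dist_zero_right, hnorm]
    exact (lt_div_iff₀ hvpos).1 hsδ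
  have hbound := hbd hmem
  rw [Real.norm_eq_abs, Real.norm_eq_abs, abs_of_nonneg (by positivity : (0:ℝ) ≤ ‖s • v‖ ^ 2)] at hbound
  have hB2 : Bn (s • v) (s • v) - Bt (s • v) (s • v) = s ^ 2 * (Bn v v - Bt v v) := by
    simp [map_smul]; ring
  have hinner : (inner ℝ gn (s • v) : ℝ) = s * inner ℝ gn v := by
    rw [inner_smul_right]
  have habs := abs_le.1 hbound
  have hn2 : ‖s • v‖ ^ 2 = s ^ 2 * ‖v‖ ^ 2 := by rw [hnorm]; ring
  have key : -(c / ‖v‖ ^ 2 * (s ^ 2 * ‖v‖ ^ 2)) ≤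
      (Ln (θ + s • v) - Lt (θ + s • v)) - (Ln θ - Lt θ) - (inner ℝ gn (s • v) : ℝ)
        - (1 / 2) * (Bn (s • v) (s • v) - Bt (s • v) (s • v)) := by
    rw [← hn2]; exact habs.1
  have hceq : c / ‖v‖ ^ 2 * (s ^ 2 * ‖v‖ ^ 2) = c * s ^ 2 := by
    field_simp
  rw [hceq, hB2, hinner] at key
  have hsgn : 0 ≤ s * inner ℝ gn v := mul_nonneg hs.le hgn
  nlinarith [sq_nonneg s, mul_pos (mul_pos hs hs) hB]
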